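/- Let A be a finite generating set of the discrete Heisenberg group H. Then there are constants C, D, E ∈ ℝ with D > 0 such that the following holds. Let n ∈ ℤ, let a₁a₂⋯a_m be a word of minimal length in the letters of A ∪ A⁻¹ representing z^n, and let f : ℝ² → ℝ be a linear functional of norm 1. Then there is a subword a_i a_{i+1} ⋯ a_j of a₁⋯a_m with C√|n| ≥ j − i ≥ D√|n| − E and C√|n| ≥ |f(φ(a_i a_{i+1} ⋯ a_j))| ≥ D√|n| − E. -/

import Mathlib

/-- The discrete Heisenberg group `H = ⟨x,y | [x,[x,y]], [y,[x,y]]⟩`, realized as triples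
`⟨a, b, c⟩` of integers (the unitriangular 3×3 integer matrix with superdiagonal `a, b` and
corner `c`), so that `x = ⟨1,0,0⟩`, `y = ⟨0,1,0⟩` and `x^i * y^j * z^k = ⟨i, j, i*j + k⟩`. -/
@[ext] structure Heis where
  a : ℤ
  b : ℤ
  c : ℤ

namespace Heis

instance : Mul Heis := ⟨fun g h => ⟨g.a + h.a, g.b + h.b, g.c + h.c + g.a * h.b⟩⟩
instance : One Heis := ⟨⟨0, 0, 0⟩⟩
instance : Inv Heis := ⟨fun g => ⟨-g.a, -g.b, g.a * g.b - g.c⟩⟩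

@[simp] lemma mul_a (g h : Heis) : (g * h).a = g.a + h.a := rfl
@[simp] lemma mul_b (g h : Heis) : (g * h).b = g.b + h.b := rfl
@[simp] lemma mul_c (g h : Heis) : (g * h).c = g.c + h.c + g.a * h.b := rfl
@[simp] lemma one_a : (1 : Heis).a = 0 := rfl
@[simp] lemma one_b : (1 : Heis).b = 0 := rfl
@[simp] lemma one_c : (1 : Heis).c = 0 := rfl
@[simp] lemma inv_a (g : Heis) : g⁻¹.a = -g.a := rfl
@[simp] lemma inv_b (g : Heis) : g⁻¹.b = -g.b := rfl
@[simp] lemma inv_c (g : Heis) : g⁻¹.c = g.a * g.b - g.c := rfl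

instance : Group Heis where
  mul_assoc g h k := by ext <;> simp <;> ring
  one_mul g := by ext <;> simp
  mul_one g := by ext <;> simp
  inv_mul_cancel g := by ext <;> simp

/-- The standard generator `x` of the Heisenberg group. -/
def x : Heis := ⟨1, 0, 0⟩
/-- The standard generator `y` of the Heisenberg group. -/
def y : Heis := ⟨0, 1, 0⟩
/-- The central element `z = [x,y] = x⁻¹y⁻¹xy`, generating the center; every element of
`Heis` is uniquely of the form `x^i * y^j * z^k`. -/
def z : Heis := ⟨0, 0, 1⟩

/-- The abelianization map `φ : Heis → Heis_ab ≅ ℤ²`, sending `x^i y^j z^k` to `(i,j)`. -/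
def φ (g : Heis) : ℤ × ℤ := (g.a, g.b)

/-- The exponent of `z` in the normal form of `g`:  the unique `k` with
`g = x^i * y^j * z^k` (where `(i,j) = φ g`). -/
def zexp (g : Heis) : ℤ := g.c - g.a * g.b

end Heis

/-- `A` is a generating set of the group `G`. -/
def IsGenSet {G : Type*} [Group G] (A : Finset G) : Prop :=
  Subgroup.closure (A : Set G) = ⊤

/-- A word in the letters of `A ∪ A⁻¹`. -/
def IsWordOn {G : Type*} [Group G] (A : Finset G) (w : List G) : Prop :=
  ∀ a ∈ w, a ∈ A ∨ a⁻¹ ∈ A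

/-- The word length `|g|_A` of `g` with respect to the finite generating set `A`:
the length of a shortest word in the letters of `A` and their inverses representing `g`. -/
noncomputable def wlen {G : Type*} [Group G] (A : Finset G) (g : G) : ℕ :=
  sInf {n | ∃ w : List G, IsWordOn A w ∧ w.length = n ∧ w.prod = g}

/-- The standard embedding of `ℤ² ≅ Heis_ab` into the Euclidean plane. -/
noncomputable def toE2 (v : ℤ × ℤ) : EuclideanSpace ℝ (Fin 2) :=
  (WithLp.equiv 2 (Fin 2 → ℝ)).symm ![(v.1 : ℝ), (v.2 : ℝ)]

namespace Heis

lemma z_pow_nat (k : ℕ) : z ^ k = ⟨0, 0, (k : ℤ)⟩ := by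
  induction k with
  | zero => rfl
  | succ k ih => rw [pow_succ, ih]; ext <;> simp [z] <;> push_cast <;> ring

lemma z_zpow (n : ℤ) : z ^ n = ⟨0, 0, n⟩ := by
  obtain ⟨k, rfl | rfl⟩ := Int.eq_nat_or_neg n
  · rw [zpow_natCast, z_pow_nat]
  · rw [zpow_neg, zpow_natCast, z_pow_nat]; ext <;> simp

lemma x_pow_nat (k : ℕ) : x ^ k = ⟨(k : ℤ), 0, 0⟩ := by
  induction k with
  | zero => rfl
  | succ k ih => rw [pow_succ, ih]; ext <;> simp [x] <;> push_cast <;> ring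

lemma y_pow_nat (k : ℕ) : y ^ k = ⟨0, (k : ℤ), 0⟩ := by
  induction k with
  | zero => rfl
  | succ k ih => rw [pow_succ, ih]; ext <;> simp [y] <;> push_cast <;> ring

lemma comm_identity (k : ℕ) :
    (x⁻¹) ^ k * ((y⁻¹) ^ k * (x ^ k * y ^ k)) = z ^ (k * k) := by
  rw [inv_pow, inv_pow, x_pow_nat, y_pow_nat, z_pow_nat]
  ext <;> simp <;> push_cast <;> ring

end Heis

section wlenLemmas

variable {G : Type*} [Group G] (A : Finset G)

lemma isWordOn_append {w₁ w₂ : List G} (h₁ : IsWordOn A w₁) (h₂ : IsWordOn A w₂) :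
    IsWordOn A (w₁ ++ w₂) := by
  intro a ha
  rcases List.mem_append.1 ha with h | h
  · exact h₁ a h
  · exact h₂ a h

lemma isWordOn_inv {w : List G} (h : IsWordOn A w) :
    IsWordOn A (w.map Inv.inv).reverse := by
  intro a ha
  rw [List.mem_reverse, List.mem_map] at ha
  obtain ⟨b, hb, rfl⟩ := ha
  rcases h b hb with h' | h'
  · right; simpa using h'
  · left; exact h'

lemma exists_word (hA : IsGenSet A) (g : G) :
    ∃ w : List G, IsWordOn A w ∧ w.prod = g := by
  have hg : g ∈ Subgroup.closure (A : Set G) := hA ▸ Subgroup.mem_top g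
  induction hg using Subgroup.closure_induction with
  | mem a ha =>
      exact ⟨[a], fun b hb => by simp at hb; subst hb; exact Or.inl ha, by simp⟩
  | one => exact ⟨[], fun b hb => by simp at hb, by simp⟩
  | mul a b _ _ iha ihb =>
      obtain ⟨w₁, hw₁, rfl⟩ := iha
      obtain ⟨w₂, hw₂, rfl⟩ := ihb
      exact ⟨w₁ ++ w₂, isWordOn_append A hw₁ hw₂, by simp⟩
  | inv a _ ih =>
      obtain ⟨w, hw, rfl⟩ := ih
      exact ⟨(w.map Inv.inv).reverse, isWordOn_inv A hw, (List.prod_inv_reverse w).symm⟩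

lemma wlen_le {w : List G} (hw : IsWordOn A w) : wlen A w.prod ≤ w.length :=
  Nat.sInf_le ⟨w, hw, rfl, rfl⟩

lemma exists_min_word (hA : IsGenSet A) (g : G) :
    ∃ w : List G, IsWordOn A w ∧ w.length = wlen A g ∧ w.prod = g := by
  have hne : {n | ∃ w : List G, IsWordOn A w ∧ w.length = n ∧ w.prod = g}.Nonempty := by
    obtain ⟨w, hw, hp⟩ := exists_word A hA g
    exact ⟨w.length, w, hw, rfl, hp⟩
  exact Nat.sInf_mem hne

lemma wlen_mul (hA : IsGenSet A) (g h : G) :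
    wlen A (g * h) ≤ wlen A g + wlen A h := by
  obtain ⟨w₁, hw₁, hl₁, rfl⟩ := exists_min_word A hA g
  obtain ⟨w₂, hw₂, hl₂, rfl⟩ := exists_min_word A hA h
  calc wlen A (w₁.prod * w₂.prod) = wlen A (w₁ ++ w₂).prod := by rw [List.prod_append]
  _ ≤ (w₁ ++ w₂).length := wlen_le A (isWordOn_append A hw₁ hw₂)
  _ = wlen A w₁.prod + wlen A w₂.prod := by rw [List.length_append, hl₁, hl₂]

lemma wlen_pow (hA : IsGenSet A) (g : G) (k : ℕ) :
    wlen A (g ^ k) ≤ k * wlen A g := by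
  induction k with
  | zero =>
      simp only [pow_zero, Nat.zero_mul, Nat.le_zero]
      have := wlen_le A (w := []) (fun a ha => by simp at ha)
      simpa using this
  | succ k ih =>
      calc wlen A (g ^ (k + 1)) = wlen A (g ^ k * g) := by rw [pow_succ]
      _ ≤ wlen A (g ^ k) + wlen A g := wlen_mul A hA _ _
      _ ≤ k * wlen A g + wlen A g := Nat.add_le_add_right ih _
      _ = (k + 1) * wlen A g := by ring

lemma wlen_inv (hA : IsGenSet A) (g : G) : wlen A g⁻¹ ≤ wlen A g := by
  obtain ⟨w, hw, hl, rfl⟩ := exists_min_word A hA g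
  calc wlen A w.prod⁻¹ = wlen A ((w.map Inv.inv).reverse).prod := by
        rw [← List.prod_inv_reverse]
  _ ≤ ((w.map Inv.inv).reverse).length := wlen_le A (isWordOn_inv A hw)
  _ = wlen A w.prod := by simpa using hl

end wlenLemmas

section zlen

variable (A : Finset Heis)

lemma wlen_z_sq (hA : IsGenSet A) (k : ℕ) :
    wlen A (Heis.z ^ (k * k)) ≤
      k * (wlen A Heis.x⁻¹ + wlen A Heis.y⁻¹ + wlen A Heis.x + wlen A Heis.y) := by
  rw [← Heis.comm_identity]
  calc wlen A ((Heis.x⁻¹) ^ k * ((Heis.y⁻¹) ^ k * (Heis.x ^ k * Heis.y ^ k)))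
      ≤ wlen A ((Heis.x⁻¹) ^ k) + (wlen A ((Heis.y⁻¹) ^ k)
          + (wlen A (Heis.x ^ k) + wlen A (Heis.y ^ k))) := by
        refine (wlen_mul A hA _ _).trans (Nat.add_le_add_left ((wlen_mul A hA _ _).trans
          (Nat.add_le_add_left (wlen_mul A hA _ _) _)) _)
  _ ≤ k * wlen A Heis.x⁻¹ + (k * wlen A Heis.y⁻¹ + (k * wlen A Heis.x + k * wlen A Heis.y)) := by
        gcongr <;> exact wlen_pow A hA _ k
  _ = k * (wlen A Heis.x⁻¹ + wlen A Heis.y⁻¹ + wlen A Heis.x + wlen A Heis.y) := by ring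

lemma wlen_z_nat (hA : IsGenSet A) (n : ℕ) :
    wlen A (Heis.z ^ n) ≤ 3 * Nat.sqrt n *
      (wlen A Heis.x⁻¹ + wlen A Heis.y⁻¹ + wlen A Heis.x + wlen A Heis.y + wlen A Heis.z) := by
  set k := Nat.sqrt n with hk
  set W := wlen A Heis.x⁻¹ + wlen A Heis.y⁻¹ + wlen A Heis.x + wlen A Heis.y + wlen A Heis.z
  have hkk : k * k ≤ n := by have := Nat.sqrt_le' n; nlinarith
  have h2k : n - k * k ≤ 2 * k := by
    have h := Nat.lt_succ_sqrt' n
    have h2 : n < k*k + 2*k + 1 := by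
      have : n < (k+1)^2 := by simpa [hk] using h
      nlinarith
    omega
  have hsplit : Heis.z ^ n = Heis.z ^ (k * k) * Heis.z ^ (n - k * k) := by
    rw [← pow_add]; congr 1; omega
  calc wlen A (Heis.z ^ n) ≤ wlen A (Heis.z ^ (k * k)) + wlen A (Heis.z ^ (n - k * k)) := by
        rw [hsplit]; exact wlen_mul A hA _ _
  _ ≤ k * (wlen A Heis.x⁻¹ + wlen A Heis.y⁻¹ + wlen A Heis.x + wlen A Heis.y)
        + (n - k * k) * wlen A Heis.z := Nat.add_le_add (wlen_z_sq A hA k) (wlen_pow A hA _ _)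
  _ ≤ k * W + (2 * k) * W := by
        refine Nat.add_le_add ?_ ?_
        · exact Nat.mul_le_mul_left _ (by omega)
        · exact Nat.mul_le_mul h2k (by omega)
  _ = 3 * k * W := by ring

lemma wlen_z_real (hA : IsGenSet A) :
    ∃ K : ℝ, 1 ≤ K ∧ ∀ n : ℤ, (wlen A (Heis.z ^ n) : ℝ) ≤ K * Real.sqrt |(n : ℝ)| := by
  set W := wlen A Heis.x⁻¹ + wlen A Heis.y⁻¹ + wlen A Heis.x + wlen A Heis.y + wlen A Heis.z
  refine ⟨3 * W + 1, by have : (0:ℝ) ≤ (W:ℝ) := Nat.cast_nonneg W; linarith, ?_⟩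
  have key : ∀ m : ℕ, (wlen A (Heis.z ^ (m : ℤ)) : ℝ) ≤ (3 * W + 1) * Real.sqrt |((m : ℤ) : ℝ)| := by
    intro m
    have h1 : (wlen A (Heis.z ^ (m : ℤ)) : ℝ) ≤ 3 * Nat.sqrt m * W := by
      rw [zpow_natCast]
      exact_mod_cast Nat.cast_le.2 (wlen_z_nat A hA m)
    have h2 : (Nat.sqrt m : ℝ) ≤ Real.sqrt |((m : ℤ) : ℝ)| := by
      have hm : |((m : ℤ) : ℝ)| = (m : ℝ) := by
        push_cast; exact abs_of_nonneg (Nat.cast_nonneg m)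
      rw [hm]
      have h3 : ((Nat.sqrt m : ℝ))^2 ≤ (m:ℝ) := by exact_mod_cast Nat.sqrt_le' m
      calc ((Nat.sqrt m : ℕ) : ℝ) = Real.sqrt (((Nat.sqrt m : ℕ) : ℝ)^2) :=
            (Real.sqrt_sq (Nat.cast_nonneg _)).symm
      _ ≤ Real.sqrt (m:ℝ) := Real.sqrt_le_sqrt h3
    calc (wlen A (Heis.z ^ (m : ℤ)) : ℝ) ≤ 3 * Nat.sqrt m * W := h1
    _ ≤ 3 * Real.sqrt |((m : ℤ) : ℝ)| * W := by
        have : (0:ℝ) ≤ W := by positivity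
        nlinarith [Real.sqrt_nonneg |((m : ℤ) : ℝ)|]
    _ ≤ (3 * W + 1) * Real.sqrt |((m : ℤ) : ℝ)| := by
        nlinarith [Real.sqrt_nonneg |((m : ℤ) : ℝ)|]
  intro n
  obtain ⟨m, rfl | rfl⟩ := Int.eq_nat_or_neg n
  · exact key m
  · have hinv : Heis.z ^ (-(m : ℤ)) = (Heis.z ^ (m : ℤ))⁻¹ := by rw [zpow_neg]
    have h1 : wlen A (Heis.z ^ (-(m : ℤ))) ≤ wlen A (Heis.z ^ (m : ℤ)) := by
      rw [hinv]; exact wlen_inv A hA _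
    have h2 := key m
    have habs : |((-(m : ℤ) : ℤ) : ℝ)| = |((m : ℤ) : ℝ)| := by push_cast; rw [abs_neg]
    rw [habs]
    exact le_trans (by exact_mod_cast Nat.cast_le.2 h1) h2

end zlen


noncomputable def vec2 (r s : ℝ) : EuclideanSpace ℝ (Fin 2) :=
  (WithLp.equiv 2 (Fin 2 → ℝ)).symm ![r, s]

lemma vec2_apply (r s : ℝ) : (vec2 r s) 0 = r ∧ (vec2 r s) 1 = s := by
  constructor <;> simp [vec2]

lemma toE2_eq_vec2 (v : ℤ × ℤ) : toE2 v = vec2 (v.1 : ℝ) (v.2 : ℝ) := rfl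

lemma vec2_decomp (r s : ℝ) : vec2 r s = r • vec2 1 0 + s • vec2 0 1 := by
  apply (WithLp.equiv 2 (Fin 2 → ℝ)).injective
  funext i
  fin_cases i <;>
    simp [vec2, PiLp.toLp_apply, PiLp.add_apply, PiLp.smul_apply]

lemma euclid_decomp (v : EuclideanSpace ℝ (Fin 2)) : v = (v 0) • vec2 1 0 + (v 1) • vec2 0 1 := by
  apply (WithLp.equiv 2 (Fin 2 → ℝ)).injective
  funext i
  fin_cases i <;>
    simp [vec2, PiLp.toLp_apply, PiLp.add_apply, PiLp.smul_apply]

lemma norm_vec2 (r s : ℝ) : ‖vec2 r s‖ = Real.sqrt (r ^ 2 + s ^ 2) := by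
  rw [EuclideanSpace.norm_eq]
  congr 1
  rw [Fin.sum_univ_two]
  simp [vec2, sq_abs]

lemma f_apply (f : EuclideanSpace ℝ (Fin 2) →L[ℝ] ℝ) (v : EuclideanSpace ℝ (Fin 2)) :
    f v = (v 0) * f (vec2 1 0) + (v 1) * f (vec2 0 1) := by
  conv_lhs => rw [euclid_decomp v]
  simp [map_add, map_smul]

lemma f_vec2 (f : EuclideanSpace ℝ (Fin 2) →L[ℝ] ℝ) (r s : ℝ) :
    f (vec2 r s) = r * f (vec2 1 0) + s * f (vec2 0 1) := by
  rw [f_apply f (vec2 r s), (vec2_apply r s).1, (vec2_apply r s).2]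

lemma unit_functional (f : EuclideanSpace ℝ (Fin 2) →L[ℝ] ℝ) (hf : ‖f‖ = 1) :
    f (vec2 1 0) ^ 2 + f (vec2 0 1) ^ 2 = 1 := by
  set e₁ := f (vec2 1 0)
  set e₂ := f (vec2 0 1)
  set s := e₁ ^ 2 + e₂ ^ 2 with hs
  have hs0 : 0 ≤ s := by positivity
  -- upper bound for ‖f‖ : ‖f‖ ≤ √s
  have hub : ‖f‖ ≤ Real.sqrt s := by
    apply ContinuousLinearMap.opNorm_le_bound _ (Real.sqrt_nonneg s)
    intro v
    rw [f_apply f v, Real.norm_eq_abs]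
    show |v 0 * e₁ + v 1 * e₂| ≤ _
    have hnv : ‖v‖ = Real.sqrt ((v 0) ^ 2 + (v 1) ^ 2) := by
      rw [euclid_decomp v, ← vec2_decomp]; exact norm_vec2 _ _
    rw [hnv, ← Real.sqrt_mul hs0]
    have hcs : ((v 0) * e₁ + (v 1) * e₂) ^ 2 ≤ s * (((v 0)) ^ 2 + ((v 1)) ^ 2) := by
      rw [hs]; nlinarith [sq_nonneg (e₁ * (v 1) - e₂ * (v 0))]
    calc |(v 0) * e₁ + (v 1) * e₂|
        = Real.sqrt (((v 0) * e₁ + (v 1) * e₂) ^ 2) := (Real.sqrt_sq_eq_abs _).symm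
    _ ≤ Real.sqrt (s * (((v 0)) ^ 2 + ((v 1)) ^ 2)) := Real.sqrt_le_sqrt hcs
  -- lower: s ≤ √s  via evaluating at (e₁,e₂)
  have hlb : s ≤ Real.sqrt s := by
    have h1 : |f (vec2 e₁ e₂)| ≤ ‖f‖ * ‖vec2 e₁ e₂‖ := f.le_opNorm _
    rw [f_vec2, hf, norm_vec2, one_mul] at h1
    calc s = e₁ * e₁ + e₂ * e₂ := by ring
    _ ≤ |e₁ * e₁ + e₂ * e₂| := le_abs_self _
    _ ≤ Real.sqrt (e₁ ^ 2 + e₂ ^ 2) := h1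
    _ = Real.sqrt s := rfl
  have h1s : 1 ≤ Real.sqrt s := hf ▸ hub
  have hsq : Real.sqrt s ^ 2 = s := Real.sq_sqrt hs0
  nlinarith [Real.sqrt_nonneg s]

noncomputable def Phi (e₁ e₂ : ℝ) (g : Heis) : ℝ :=
  (Heis.zexp g : ℝ) + (g.a : ℝ) * (g.b : ℝ) / 2
    - ((g.a : ℝ) * e₁ + (g.b : ℝ) * e₂) * ((g.a : ℝ) * e₂ - (g.b : ℝ) * e₁) / 2

lemma Phi_one (e₁ e₂ : ℝ) : Phi e₁ e₂ 1 = 0 := by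
  simp [Phi, Heis.zexp]

lemma Phi_mul (e₁ e₂ : ℝ) (he : e₁ ^ 2 + e₂ ^ 2 = 1) (g h : Heis) :
    Phi e₁ e₂ (g * h) = Phi e₁ e₂ g +
      ((Heis.zexp h : ℝ) - ((g.a : ℝ) * e₁ + (g.b : ℝ) * e₂) * ((h.a : ℝ) * e₂ - (h.b : ℝ) * e₁)
        - ((h.a : ℝ) * e₁ + (h.b : ℝ) * e₂) * ((h.a : ℝ) * e₂ - (h.b : ℝ) * e₁) / 2
        + (h.a : ℝ) * (h.b : ℝ) / 2) := by
  simp only [Phi, Heis.zexp, Heis.mul_a, Heis.mul_b, Heis.mul_c]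
  push_cast
  linear_combination (((g.b : ℝ) * (h.a : ℝ) - (g.a : ℝ) * (h.b : ℝ)) / 2) * he

lemma Phi_bound (e₁ e₂ : ℝ) (he : e₁ ^ 2 + e₂ ^ 2 = 1) (he₁ : |e₁| ≤ 1) (he₂ : |e₂| ≤ 1)
    (M Z Fm : ℝ) :
    ∀ w : List Heis,
      (∀ a ∈ w, |(a.a : ℝ)| + |(a.b : ℝ)| ≤ M ∧ |(Heis.zexp a : ℝ)| ≤ Z) →
      (∀ p : List Heis, p <+: w → |(p.prod.a : ℝ) * e₁ + (p.prod.b : ℝ) * e₂| ≤ Fm) →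
      |Phi e₁ e₂ w.prod| ≤ w.length * (Z + M ^ 2 + M * Fm) := by
  intro w
  induction w using List.reverseRecOn with
  | nil =>
      intro _ _
      simp [Phi_one]
  | append_singleton w a ih =>
      intro hw hp
      have hw' : ∀ b ∈ w, |(b.a : ℝ)| + |(b.b : ℝ)| ≤ M ∧ |(Heis.zexp b : ℝ)| ≤ Z :=
        fun b hb => hw b (List.mem_append.2 (Or.inl hb))
      have hp' : ∀ p : List Heis, p <+: w → |(p.prod.a : ℝ) * e₁ + (p.prod.b : ℝ) * e₂| ≤ Fm :=
        fun p hpre => hp p (hpre.trans (List.prefix_append w [a]))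
      have hih := ih hw' hp'
      have ha := hw a (List.mem_append.2 (Or.inr (by simp)))
      have hwpre := hp w (List.prefix_append w [a])
      have haa : |(a.a : ℝ)| ≤ M := by
        have := abs_nonneg ((a.b : ℝ)); linarith [ha.1]
      have hab : |(a.b : ℝ)| ≤ M := by
        have := abs_nonneg ((a.a : ℝ)); linarith [ha.1]
      have hM0 : 0 ≤ M := le_trans (abs_nonneg _) haa
      have hFm0 : 0 ≤ Fm := le_trans (abs_nonneg _) hwpre
      rw [List.prod_append, List.prod_singleton, Phi_mul e₁ e₂ he]
      have t1 : |(a.a : ℝ) * e₂| ≤ |(a.a : ℝ)| := by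
        rw [abs_mul]; exact mul_le_of_le_one_right (abs_nonneg _) he₂
      have t2 : |(a.b : ℝ) * e₁| ≤ |(a.b : ℝ)| := by
        rw [abs_mul]; exact mul_le_of_le_one_right (abs_nonneg _) he₁
      have t3 : |(a.a : ℝ) * e₁| ≤ |(a.a : ℝ)| := by
        rw [abs_mul]; exact mul_le_of_le_one_right (abs_nonneg _) he₁
      have t4 : |(a.b : ℝ) * e₂| ≤ |(a.b : ℝ)| := by
        rw [abs_mul]; exact mul_le_of_le_one_right (abs_nonneg _) he₂
      have hga : |(a.a : ℝ) * e₂ - (a.b : ℝ) * e₁| ≤ M := by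
        have := abs_sub ((a.a : ℝ) * e₂) ((a.b : ℝ) * e₁)
        linarith [ha.1]
      have hfa : |(a.a : ℝ) * e₁ + (a.b : ℝ) * e₂| ≤ M := by
        have := abs_add_le ((a.a : ℝ) * e₁) ((a.b : ℝ) * e₂)
        linarith [ha.1]
      have hstep : |(Heis.zexp a : ℝ)
          - ((w.prod.a : ℝ) * e₁ + (w.prod.b : ℝ) * e₂) * ((a.a : ℝ) * e₂ - (a.b : ℝ) * e₁)
          - ((a.a : ℝ) * e₁ + (a.b : ℝ) * e₂) * ((a.a : ℝ) * e₂ - (a.b : ℝ) * e₁) / 2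
          + (a.a : ℝ) * (a.b : ℝ) / 2| ≤ Z + M ^ 2 + M * Fm := by
        have h1 : |((w.prod.a : ℝ) * e₁ + (w.prod.b : ℝ) * e₂) * ((a.a : ℝ) * e₂ - (a.b : ℝ) * e₁)|
            ≤ Fm * M := by
          rw [abs_mul]; exact mul_le_mul hwpre hga (abs_nonneg _) hFm0
        have h2 : |((a.a : ℝ) * e₁ + (a.b : ℝ) * e₂) * ((a.a : ℝ) * e₂ - (a.b : ℝ) * e₁)|
            ≤ M * M := by
          rw [abs_mul]; exact mul_le_mul hfa hga (abs_nonneg _) hM0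
        have h3 : |(a.a : ℝ) * (a.b : ℝ)| ≤ M * M := by
          rw [abs_mul]; exact mul_le_mul haa hab (abs_nonneg _) hM0
        have h4 := ha.2
        have e1 := abs_sub ((Heis.zexp a : ℝ))
          (((w.prod.a : ℝ) * e₁ + (w.prod.b : ℝ) * e₂) * ((a.a : ℝ) * e₂ - (a.b : ℝ) * e₁))
        calc _ ≤ |(Heis.zexp a : ℝ)
              - ((w.prod.a : ℝ) * e₁ + (w.prod.b : ℝ) * e₂) * ((a.a : ℝ) * e₂ - (a.b : ℝ) * e₁)
              - ((a.a : ℝ) * e₁ + (a.b : ℝ) * e₂) * ((a.a : ℝ) * e₂ - (a.b : ℝ) * e₁) / 2|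
              + |(a.a : ℝ) * (a.b : ℝ) / 2| := abs_add_le _ _
        _ ≤ |(Heis.zexp a : ℝ)
              - ((w.prod.a : ℝ) * e₁ + (w.prod.b : ℝ) * e₂) * ((a.a : ℝ) * e₂ - (a.b : ℝ) * e₁)|
              + |((a.a : ℝ) * e₁ + (a.b : ℝ) * e₂) * ((a.a : ℝ) * e₂ - (a.b : ℝ) * e₁) / 2|
              + |(a.a : ℝ) * (a.b : ℝ) / 2| := by
            have := abs_sub ((Heis.zexp a : ℝ)
              - ((w.prod.a : ℝ) * e₁ + (w.prod.b : ℝ) * e₂) * ((a.a : ℝ) * e₂ - (a.b : ℝ) * e₁))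
              (((a.a : ℝ) * e₁ + (a.b : ℝ) * e₂) * ((a.a : ℝ) * e₂ - (a.b : ℝ) * e₁) / 2)
            linarith
        _ ≤ Z + M ^ 2 + M * Fm := by
            rw [abs_div, abs_div]
            have h5 : |(Heis.zexp a : ℝ)
                - ((w.prod.a : ℝ) * e₁ + (w.prod.b : ℝ) * e₂) * ((a.a : ℝ) * e₂ - (a.b : ℝ) * e₁)|
                ≤ Z + Fm * M := by
              calc _ ≤ |(Heis.zexp a : ℝ)| + |((w.prod.a : ℝ) * e₁ + (w.prod.b : ℝ) * e₂)
                    * ((a.a : ℝ) * e₂ - (a.b : ℝ) * e₁)| := abs_sub _ _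
              _ ≤ Z + Fm * M := add_le_add h4 h1
            have hd2 : |(2 : ℝ)| = 2 := by norm_num
            rw [hd2]
            nlinarith [h2, h3, h5]
      calc |Phi e₁ e₂ w.prod + _| ≤ |Phi e₁ e₂ w.prod| + _ := abs_add_le _ _
      _ ≤ w.length * (Z + M ^ 2 + M * Fm) + (Z + M ^ 2 + M * Fm) := add_le_add hih hstep
      _ = (w ++ [a]).length * (Z + M ^ 2 + M * Fm) := by
          rw [List.length_append, List.length_singleton]; push_cast; ring

lemma comp_bound (M : ℝ) :
    ∀ w : List Heis, (∀ a ∈ w, |(a.a : ℝ)| + |(a.b : ℝ)| ≤ M) →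
      |(w.prod.a : ℝ)| + |(w.prod.b : ℝ)| ≤ w.length * M := by
  intro w
  induction w with
  | nil => intro _; simp
  | cons a w ih =>
      intro h
      have ha := h a (by simp)
      have hw := ih (fun b hb => h b (by simp [hb]))
      have h1 : (((a :: w).prod.a : ℝ)) = (a.a : ℝ) + (w.prod.a : ℝ) := by
        rw [List.prod_cons]; push_cast [Heis.mul_a]; ring
      have h2 : (((a :: w).prod.b : ℝ)) = (a.b : ℝ) + (w.prod.b : ℝ) := by
        rw [List.prod_cons]; push_cast [Heis.mul_b]; ring
      rw [h1, h2, List.length_cons]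
      push_cast
      have := abs_add_le (a.a : ℝ) (w.prod.a : ℝ)
      have := abs_add_le (a.b : ℝ) (w.prod.b : ℝ)
      linarith


set_option maxHeartbeats 2000000 in
/-- Proposition `dirvar`. For every finite generating set `A` of the
discrete Heisenberg group there are `C, D, E ∈ ℝ` with `D > 0` such that for every `n ∈ ℤ`,
every minimal-length word `a₁⋯a_m` in the letters of `A ∪ A⁻¹` representing `z^n`, and every
linear functional `f : ℝ² → ℝ` of norm `1`, there is a subword `u₂` (so `a₁⋯a_m = u₁ u₂ u₃`)
with `C√|n| ≥ l(u₂) ≥ D√|n| − E` and `C√|n| ≥ |f(φ(u₂))| ≥ D√|n| − E`. -/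
theorem heisenberg_dirvar
    (A : Finset Heis) (hA : IsGenSet A) :
    ∃ C D E : ℝ, 0 < D ∧
      ∀ (n : ℤ) (w : List Heis),
        IsWordOn A w → w.prod = Heis.z ^ n → w.length = wlen A (Heis.z ^ n) →
        ∀ f : EuclideanSpace ℝ (Fin 2) →L[ℝ] ℝ, ‖f‖ = 1 →
          ∃ u₁ u₂ u₃ : List Heis, w = u₁ ++ u₂ ++ u₃ ∧
            (u₂.length : ℝ) ≤ C * Real.sqrt |(n : ℝ)| ∧
            D * Real.sqrt |(n : ℝ)| - E ≤ (u₂.length : ℝ) ∧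
            |f (toE2 (Heis.φ u₂.prod))| ≤ C * Real.sqrt |(n : ℝ)| ∧
            D * Real.sqrt |(n : ℝ)| - E ≤ |f (toE2 (Heis.φ u₂.prod))| := by
  obtain ⟨K, hK1, hKb⟩ := wlen_z_real A hA
  have hK0 : (0:ℝ) < K := lt_of_lt_of_le one_pos hK1
  set M : ℝ := (∑ g ∈ A, (|(g.a : ℝ)| + |(g.b : ℝ)|)) + 1 with hMdef
  set Z : ℝ := ∑ g ∈ A, (|(Heis.zexp g : ℝ)| + |(g.c : ℝ)|) with hZdef
  have hsum0 : (0:ℝ) ≤ ∑ g ∈ A, (|(g.a : ℝ)| + |(g.b : ℝ)|) :=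
    Finset.sum_nonneg fun g _ => by positivity
  have hM1 : (1:ℝ) ≤ M := by rw [hMdef]; linarith
  have hM0 : (0:ℝ) < M := lt_of_lt_of_le one_pos hM1
  have hZ0 : (0:ℝ) ≤ Z := Finset.sum_nonneg fun g _ => by positivity
  have hletter : ∀ a : Heis, (a ∈ A ∨ a⁻¹ ∈ A) →
      |(a.a : ℝ)| + |(a.b : ℝ)| ≤ M ∧ |(Heis.zexp a : ℝ)| ≤ Z := by
    intro a ha
    rcases ha with ha | ha
    · constructor
      · have := Finset.single_le_sum (f := fun g : Heis => (|(g.a : ℝ)| + |(g.b : ℝ)|))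
          (fun g _ => by positivity) ha
        rw [hMdef]; linarith
      · have := Finset.single_le_sum (f := fun g : Heis => (|(Heis.zexp g : ℝ)| + |(g.c : ℝ)|))
          (fun g _ => by positivity) ha
        rw [hZdef]
        have : |(Heis.zexp a : ℝ)| + |(a.c : ℝ)| ≤ Z := by rw [hZdef]; exact this
        have h0 : (0:ℝ) ≤ |(a.c : ℝ)| := abs_nonneg _
        linarith
    · constructor
      · have := Finset.single_le_sum (f := fun g : Heis => (|(g.a : ℝ)| + |(g.b : ℝ)|))
          (fun g _ => by positivity) ha
        have h1 : |((a⁻¹).a : ℝ)| = |(a.a : ℝ)| := by rw [Heis.inv_a]; push_cast; rw [abs_neg]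
        have h2 : |((a⁻¹).b : ℝ)| = |(a.b : ℝ)| := by rw [Heis.inv_b]; push_cast; rw [abs_neg]
        rw [h1, h2] at this
        rw [hMdef]; linarith
      · have := Finset.single_le_sum (f := fun g : Heis => (|(Heis.zexp g : ℝ)| + |(g.c : ℝ)|))
          (fun g _ => by positivity) ha
        have h1 : |((a⁻¹).c : ℝ)| = |(Heis.zexp a : ℝ)| := by
          rw [Heis.inv_c]; unfold Heis.zexp; push_cast
          rw [show (a.a : ℝ) * a.b - a.c = -((a.c : ℝ) - a.a * a.b) by ring, abs_neg]
        rw [h1] at this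
        have h0 : (0:ℝ) ≤ |(Heis.zexp a⁻¹ : ℝ)| := abs_nonneg _
        rw [hZdef]
        have hh : |(Heis.zexp a⁻¹ : ℝ)| + |(Heis.zexp a : ℝ)| ≤ Z := by rw [hZdef]; exact this
        linarith
  clear_value M Z
  refine ⟨M * K, 1 / (K * M ^ 2), Z + M ^ 2, by positivity, ?_⟩
  intro n w hw hprod hlen f hf
  set e₁ := f (vec2 1 0) with he₁def
  set e₂ := f (vec2 0 1) with he₂def
  have he : e₁ ^ 2 + e₂ ^ 2 = 1 := unit_functional f hf
  have habs1 : |e₁| ≤ 1 := by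
    rw [abs_le]; constructor <;> nlinarith [sq_nonneg e₂, sq_nonneg (e₁ + 1), sq_nonneg (e₁ - 1)]
  have habs2 : |e₂| ≤ 1 := by
    rw [abs_le]; constructor <;> nlinarith [sq_nonneg e₁, sq_nonneg (e₂ + 1), sq_nonneg (e₂ - 1)]
  have hfval : ∀ g : Heis, f (toE2 (Heis.φ g)) = (g.a : ℝ) * e₁ + (g.b : ℝ) * e₂ := by
    intro g
    rw [toE2_eq_vec2, f_vec2]
    rfl
  by_cases hn : n = 0
  · subst hn
    have hw0 : wlen A (Heis.z ^ (0:ℤ)) = 0 := by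
      have h := wlen_le A (w := ([] : List Heis)) (fun a ha => by simp at ha)
      simpa using h
    rw [hw0] at hlen
    have : w = [] := List.eq_nil_of_length_eq_zero hlen
    subst this
    refine ⟨[], [], [], by simp, ?_, ?_, ?_, ?_⟩ <;>
      simp [hfval] <;> nlinarith [hZ0, hM1]
  -- main case
  · set s := Real.sqrt |(n : ℝ)| with hsdef
    have hn1 : (1:ℝ) ≤ |(n : ℝ)| := by
      rw [← Int.cast_abs]
      exact_mod_cast Int.one_le_abs hn
    have hs1 : (1:ℝ) ≤ s := by
      rw [hsdef, show (1:ℝ) = Real.sqrt 1 from (Real.sqrt_one).symm]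
      exact Real.sqrt_le_sqrt hn1
    have hs0 : (0:ℝ) < s := lt_of_lt_of_le one_pos hs1
    have hss : s ^ 2 = |(n : ℝ)| := Real.sq_sqrt (abs_nonneg _)
    have hms : (w.length : ℝ) ≤ K * s := by rw [hlen]; exact hKb n
    -- the sup over prefixes
    have hne : (Finset.range (w.length + 1)).Nonempty := ⟨0, by simp⟩
    set Ffun : ℕ → ℝ :=
      fun i => |(((w.take i).prod.a : ℝ)) * e₁ + (((w.take i).prod.b : ℝ)) * e₂| with hFfun
    set F := (Finset.range (w.length + 1)).sup' hne Ffun with hFdef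
    obtain ⟨i₀, hi₀mem, hi₀⟩ := Finset.exists_mem_eq_sup' hne Ffun
    have hFmax : ∀ p : List Heis, p <+: w →
        |(p.prod.a : ℝ) * e₁ + (p.prod.b : ℝ) * e₂| ≤ F := by
      intro p hp
      have hpt : p = w.take p.length := List.prefix_iff_eq_take.1 hp
      have hplen : p.length ∈ Finset.range (w.length + 1) := by
        rw [Finset.mem_range]; exact Nat.lt_succ_of_le hp.length_le
      have := Finset.le_sup' Ffun hplen
      rw [hFdef]
      calc |(p.prod.a : ℝ) * e₁ + (p.prod.b : ℝ) * e₂| = Ffun p.length := by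
            rw [hFfun]; simp only; rw [← hpt]
      _ ≤ _ := this
  -- apply Phi bound
    have hwl : ∀ a ∈ w, |(a.a : ℝ)| + |(a.b : ℝ)| ≤ M ∧ |(Heis.zexp a : ℝ)| ≤ Z :=
      fun a ha => hletter a (hw a ha)
    have hPhi := Phi_bound e₁ e₂ he habs1 habs2 M Z F w hwl hFmax
    have hPhiz : Phi e₁ e₂ w.prod = (n : ℝ) := by
      rw [hprod, Heis.z_zpow]
      unfold Phi Heis.zexp
      norm_num
    rw [hPhiz] at hPhi
    have hF0 : 0 ≤ F := le_trans (abs_nonneg _) (hFmax [] (List.nil_prefix))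
    have hFeq : |((w.take i₀).prod.a : ℝ) * e₁ + ((w.take i₀).prod.b : ℝ) * e₂| = F := by
      rw [hFdef, hi₀, hFfun]
    clear_value F
    clear_value s
    -- key inequality : s ≤ K * (Z + M^2 + M * F)
    have hkey : s ≤ K * (Z + M ^ 2 + M * F) := by
      have hB0 : 0 ≤ Z + M ^ 2 + M * F := by positivity
      have h1 : s ^ 2 ≤ (K * s) * (Z + M ^ 2 + M * F) := by
        calc s ^ 2 = |(n : ℝ)| := hss
        _ ≤ (w.length : ℝ) * (Z + M ^ 2 + M * F) := hPhi
        _ ≤ (K * s) * (Z + M ^ 2 + M * F) := by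
            exact mul_le_mul_of_nonneg_right hms hB0
      nlinarith
    -- the subword
    refine ⟨[], w.take i₀, w.drop i₀, by simp, ?_, ?_, ?_, ?_⟩
    · -- length upper bound
      have h1 : ((w.take i₀).length : ℝ) ≤ (w.length : ℝ) := by
        exact_mod_cast (by simp [List.length_take] : (w.take i₀).length ≤ w.length)
      calc ((w.take i₀).length : ℝ) ≤ (w.length : ℝ) := h1
      _ ≤ K * s := hms
      _ ≤ M * K * s := by nlinarith
    · -- length lower bound
      have hcomp := comp_bound M (w.take i₀)
        (fun a ha => (hwl a (List.mem_of_mem_take ha)).1)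
      have hFL : F ≤ ((w.take i₀).length : ℝ) * M := by
        rw [← hFeq]
        have t3 : |((w.take i₀).prod.a : ℝ) * e₁| ≤ |((w.take i₀).prod.a : ℝ)| := by
          rw [abs_mul]; exact mul_le_of_le_one_right (abs_nonneg _) habs1
        have t4 : |((w.take i₀).prod.b : ℝ) * e₂| ≤ |((w.take i₀).prod.b : ℝ)| := by
          rw [abs_mul]; exact mul_le_of_le_one_right (abs_nonneg _) habs2
        have := abs_add_le (((w.take i₀).prod.a : ℝ) * e₁) (((w.take i₀).prod.b : ℝ) * e₂)
        linarith
      -- s ≤ K*M^2*(Z+M^2) + K*M^2*L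
      have hL0 : (0:ℝ) ≤ ((w.take i₀).length : ℝ) := Nat.cast_nonneg _
      have h2 : s ≤ K * M ^ 2 * ((Z + M ^ 2) + ((w.take i₀).length : ℝ)) := by
        have hM2 : (1:ℝ) ≤ M ^ 2 := by nlinarith
        have e1' := mul_le_mul_of_nonneg_right hM2 (show (0:ℝ) ≤ Z + M ^ 2 by positivity)
        have e1 : Z + M ^ 2 ≤ M ^ 2 * (Z + M ^ 2) := by nlinarith [e1']
        have hMF : M * F ≤ M ^ 2 * ((w.take i₀).length : ℝ) := by
          nlinarith [mul_le_mul_of_nonneg_left hFL hM0.le]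
        have e2 : Z + M ^ 2 + M * F ≤ M ^ 2 * ((Z + M ^ 2) + ((w.take i₀).length : ℝ)) := by
          nlinarith [e1, hMF]
        calc s ≤ K * (Z + M ^ 2 + M * F) := hkey
        _ ≤ K * (M ^ 2 * ((Z + M ^ 2) + ((w.take i₀).length : ℝ))) :=
            mul_le_mul_of_nonneg_left e2 hK0.le
        _ = K * M ^ 2 * ((Z + M ^ 2) + ((w.take i₀).length : ℝ)) := by ring
      have hfin : s / (K * M ^ 2) ≤ (Z + M ^ 2) + ((w.take i₀).length : ℝ) := by
        rw [div_le_iff₀ (by positivity : (0:ℝ) < K * M ^ 2)]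
        calc s ≤ K * M ^ 2 * ((Z + M ^ 2) + ((w.take i₀).length : ℝ)) := h2
        _ = ((Z + M ^ 2) + ((w.take i₀).length : ℝ)) * (K * M ^ 2) := by ring
      calc 1 / (K * M ^ 2) * s - (Z + M ^ 2) = s / (K * M ^ 2) - (Z + M ^ 2) := by ring
      _ ≤ ((w.take i₀).length : ℝ) := by linarith
    · -- f upper bound
      have hcomp := comp_bound M (w.take i₀)
        (fun a ha => (hwl a (List.mem_of_mem_take ha)).1)
      rw [hfval]
      have t3 : |((w.take i₀).prod.a : ℝ) * e₁| ≤ |((w.take i₀).prod.a : ℝ)| := by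
        rw [abs_mul]; exact mul_le_of_le_one_right (abs_nonneg _) habs1
      have t4 : |((w.take i₀).prod.b : ℝ) * e₂| ≤ |((w.take i₀).prod.b : ℝ)| := by
        rw [abs_mul]; exact mul_le_of_le_one_right (abs_nonneg _) habs2
      have habsadd := abs_add_le (((w.take i₀).prod.a : ℝ) * e₁) (((w.take i₀).prod.b : ℝ) * e₂)
      have h1 : ((w.take i₀).length : ℝ) ≤ (w.length : ℝ) := by
        exact_mod_cast (by simp [List.length_take] : (w.take i₀).length ≤ w.length)
      have : ((w.take i₀).length : ℝ) * M ≤ K * s * M := by nlinarith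
      calc |((w.take i₀).prod.a : ℝ) * e₁ + ((w.take i₀).prod.b : ℝ) * e₂|
          ≤ ((w.take i₀).length : ℝ) * M := by linarith
      _ ≤ K * s * M := this
      _ = M * K * s := by ring
    · -- f lower bound
      rw [hfval]
      rw [hFeq]
      have h2 : s ≤ K * M ^ 2 * ((Z + M ^ 2) + F) := by
        have hM2 : (1:ℝ) ≤ M ^ 2 := by nlinarith
        have e1' := mul_le_mul_of_nonneg_right hM2 (show (0:ℝ) ≤ Z + M ^ 2 by positivity)
        have e1 : Z + M ^ 2 ≤ M ^ 2 * (Z + M ^ 2) := by nlinarith [e1']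
        have hMF : M * F ≤ M ^ 2 * F := by nlinarith [mul_le_mul_of_nonneg_right hM1 hF0]
        have e2 : Z + M ^ 2 + M * F ≤ M ^ 2 * ((Z + M ^ 2) + F) := by nlinarith [e1, hMF]
        calc s ≤ K * (Z + M ^ 2 + M * F) := hkey
        _ ≤ K * (M ^ 2 * ((Z + M ^ 2) + F)) := mul_le_mul_of_nonneg_left e2 hK0.le
        _ = K * M ^ 2 * ((Z + M ^ 2) + F) := by ring
      have hfin : s / (K * M ^ 2) ≤ (Z + M ^ 2) + F := by
        rw [div_le_iff₀ (by positivity : (0:ℝ) < K * M ^ 2)]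
        calc s ≤ K * M ^ 2 * ((Z + M ^ 2) + F) := h2
        _ = ((Z + M ^ 2) + F) * (K * M ^ 2) := by ring
      calc 1 / (K * M ^ 2) * s - (Z + M ^ 2) = s / (K * M ^ 2) - (Z + M ^ 2) := by ring
      _ ≤ F := by linarith
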